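/- Fix n ∈ ℕ and q,a,b,c ∈ ℂ with q ≠ 0, a ≠ 0, q^j ≠ 1 for 1 ≤ j ≤ n, and a b q^j ≠ 1, a c q^j ≠ 1 for 0 ≤ j ≤ n−1. Define the continuous dual q-Hahn polynomial (in monic-normalised form) as the function p_n(y) := [(a b;q)_n·(a c;q)_n / a^n]·Σ_{k=0}^{n} [(q^{−n};q)_k·(a y;q)_k·(a/y;q)_k / ((q;q)_k·(a b;q)_k·(a c;q)_k)]·q^k, for y ∈ ℂ∖{0}. Then p_n is an eigenfunction, with eigenvalue q^{−n}, of the operator K₀ of the basic representation of the confluent Zhedanov algebra Z_V: for every x ∈ ℂ with x ≠ 0 and x² ∉ {1, q, q⁻¹}, [(1−a x)(1−b x)(1−c x)/((1−x²)(1−q x²))]·(p_n(q x) − p_n(x)) + p_n(x) − x·[(a−x)(b−x)(c−x)/((1−x²)(q−x²))]·(p_n(x/q) − p_n(x)) = q^{−n}·p_n(x). -/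

import Mathlib

set_option maxHeartbeats 1000000000
set_option maxRecDepth 100000

open Finset

/-- The q-Pochhammer symbol `(z; q)_k`. -/
noncomputable def qPoch (z q : ℂ) (k : ℕ) : ℂ := ∏ j ∈ Finset.range k, (1 - z * q ^ j)

lemma qPoch_succ (z q : ℂ) (k : ℕ) : qPoch z q (k+1) = qPoch z q k * (1 - z * q ^ k) :=
  Finset.prod_range_succ _ _

lemma qPoch_succ' (z q : ℂ) (k : ℕ) : qPoch z q (k+1) = (1 - z) * qPoch (z*q) q k := by
  rw [qPoch, qPoch, Finset.prod_range_succ', pow_zero, mul_one, mul_comm]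
  congr 1
  exact Finset.prod_congr rfl fun j _ => by ring

lemma qPoch_mul_shift (z q : ℂ) (k : ℕ) :
    (1 - z) * qPoch (z*q) q k = qPoch z q k * (1 - z * q ^ k) := by
  rw [← qPoch_succ', qPoch_succ]

lemma qPoch_div_shift (z q : ℂ) (hq : q ≠ 0) (k : ℕ) :
    qPoch (z/q) q (k+1) = (1 - z/q) * qPoch z q k := by
  rw [qPoch_succ', div_mul_cancel₀ _ hq]

/-- Key single-term identity: the operator `K₀` acts on the basis
`φ_{k+1}(x) = (a x; q)_{k+1} (a/x; q)_{k+1}` with eigenvalue `q^{-(k+1)}` plus a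
lowering term proportional to `φ_k(x)`. -/
lemma qHahn_key (q a b c x : ℂ) (k : ℕ) (hq : q ≠ 0) (hx : x ≠ 0)
    (h1 : x^2 ≠ 1) (h2 : x^2 ≠ q) (h3 : x^2 ≠ q⁻¹) :
    (1 - a*x) * (1 - b*x) * (1 - c*x) / ((1 - x^2) * (1 - q*x^2)) *
      (qPoch (a*(q*x)) q (k+1) * qPoch (a/(q*x)) q (k+1)
        - qPoch (a*x) q (k+1) * qPoch (a/x) q (k+1))
    + qPoch (a*x) q (k+1) * qPoch (a/x) q (k+1)
    - x * ((a - x) * (b - x) * (c - x) / ((1 - x^2) * (q - x^2))) *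
      (qPoch (a*(x/q)) q (k+1) * qPoch (a/(x/q)) q (k+1)
        - qPoch (a*x) q (k+1) * qPoch (a/x) q (k+1))
    = (q^(k+1))⁻¹ * (qPoch (a*x) q (k+1) * qPoch (a/x) q (k+1))
      + (-(q^(k+1))⁻¹ * (1 - q^(k+1)) * (1 - a*b*q^k) * (1 - a*c*q^k)) *
        (qPoch (a*x) q k * qPoch (a/x) q k) := by
  have hx2 : (1:ℂ) - x^2 ≠ 0 := sub_ne_zero.mpr (Ne.symm h1)
  have hqmx : q - x^2 ≠ 0 := sub_ne_zero.mpr (Ne.symm h2)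
  have hqx2 : (1:ℂ) - q*x^2 ≠ 0 := by
    refine sub_ne_zero.mpr fun h => h3 ?_
    exact eq_inv_of_mul_eq_one_left (by linear_combination -h)
  have hqk1 : (q:ℂ)^(k+1) ≠ 0 := pow_ne_zero _ hq
  obtain ⟨α, rfl⟩ : ∃ α, a = α * x := ⟨a / x, (div_mul_cancel₀ a hx).symm⟩
  rw [show α*x*(q*x) = α*x^2*q from by ring,
      show α*x/(q*x) = α/q from by field_simp,
      show α*x*(x/q) = α*x^2/q from by ring,
      show α*x/(x/q) = α*q from by field_simp,
      show α*x*x = α*x^2 from by ring,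
      show α*x/x = α from by field_simp,
      show α*x - x = (α - 1)*x from by ring]
  by_cases hax : α*x^2 = 1
  · -- boundary case a·x = 1
    have hz : (1:ℂ) - α*x^2 = 0 := by rw [hax]; ring
    cases k with
    | zero =>
      have ha' : α = (x^2)⁻¹ := eq_inv_of_mul_eq_one_left hax
      subst ha'
      simp only [qPoch, zero_add, Finset.prod_range_one, Finset.prod_range_zero, pow_zero, mul_one]
      field_simp
      ring
    | succ m =>
      have hA : ∀ j : ℕ, qPoch (α*x^2) q (j+1) = 0 := by
        intro j; rw [qPoch_succ', hz, zero_mul]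
      rw [qPoch_div_shift (α*x^2) q hq (m+1), hA (m+1), hA m, hz]
      ring
  · have h1ax : (1:ℂ) - α*x^2 ≠ 0 := sub_ne_zero.mpr (Ne.symm hax)
    by_cases haeq : α = 1
    · -- boundary case a = x
      have hz : (1:ℂ) - α = 0 := by rw [haeq]; ring
      cases k with
      | zero =>
        subst haeq
        simp only [qPoch, zero_add, Finset.prod_range_one, Finset.prod_range_zero, pow_zero, mul_one]
        field_simp [show (1:ℂ) - x^2*q ≠ 0 by rw [mul_comm]; exact hqx2]
        ring
      | succ m =>
        have hA : ∀ j : ℕ, qPoch α q (j+1) = 0 := by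
          intro j; rw [qPoch_succ', hz, zero_mul]
        have hax0 : (α - 1)*x = 0 := by rw [haeq]; ring
        rw [qPoch_div_shift α q hq (m+1), hA (m+1), hA m, hax0]
        ring
    · -- generic case
      have h1dx : (1:ℂ) - α ≠ 0 := sub_ne_zero.mpr (Ne.symm haeq)
      rw [qPoch_succ (α*x^2*q), qPoch_succ (α*q),
          qPoch_div_shift (α*x^2) q hq k, qPoch_div_shift α q hq k,
          qPoch_succ (α*x^2), qPoch_succ α]
      have r1 := qPoch_mul_shift (α*x^2) q k
      have r2 := qPoch_mul_shift α q k
      have hx2' : (1:ℂ) - x*x ≠ 0 := by rw [show x*x = x^2 from (sq x).symm]; exact hx2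
      have hqx2' : (1:ℂ) - q*(x*x) ≠ 0 := by rw [show x*x = x^2 from (sq x).symm]; exact hqx2
      have hqmx' : q - x*x ≠ 0 := by rw [show x*x = x^2 from (sq x).symm]; exact hqmx
      rw [show (q:ℂ)^(k+1) = q^k*q from pow_succ q k]
      generalize hA1 : qPoch (α*x^2) q k = A1 at r1 ⊢
      generalize hA2 : qPoch α q k = A2 at r2 ⊢
      generalize hB1 : qPoch (α*x^2*q) q k = B1 at r1 ⊢
      generalize hB2 : qPoch (α*q) q k = B2 at r2 ⊢
      generalize hT : (q:ℂ)^k = T at r1 r2 ⊢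
      have hT0 : T ≠ 0 := by rw [← hT]; exact pow_ne_zero _ hq
      have e1 : B1 = A1*(1-α*x^2*T)/(1-α*x^2) := by rw [eq_div_iff h1ax]; linear_combination r1
      have e2 : B2 = A2*(1-α*T)/(1-α) := by rw [eq_div_iff h1dx]; linear_combination r2
      subst e1 e2
      field_simp [hx2', hqx2', hqmx', hT0, show (1:ℂ) - x^2*q ≠ 0 by rw [mul_comm]; exact hqx2]
      ring

/-- Abstract telescoping: from the local three-term structure and the coefficient
recurrence, the full sum is an eigenvector. -/
lemma aux_telescope (n : ℕ) (q : ℂ) (Cf R Op Φx : ℕ → ℂ)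
    (hOp0 : Op 0 = Φx 0)
    (hkey : ∀ k : ℕ, Op (k+1) = (q^(k+1))⁻¹ * Φx (k+1) + R (k+1) * Φx k)
    (hcoeff : ∀ k, k < n → Cf (k+1) * R (k+1) = ((q^n)⁻¹ - (q^k)⁻¹) * Cf k) :
    ∑ k ∈ Finset.range (n+1), Cf k * Op k
      = (q^n)⁻¹ * ∑ k ∈ Finset.range (n+1), Cf k * Φx k := by
  have h2 : ∀ k ∈ Finset.range n, Cf (k+1) * Op (k+1)
      = (q^(k+1))⁻¹ * (Cf (k+1) * Φx (k+1)) + ((q^n)⁻¹ - (q^k)⁻¹) * (Cf k * Φx k) := by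
    intro k hk
    rw [hkey k]
    linear_combination Φx k * hcoeff k (Finset.mem_range.mp hk)
  calc ∑ k ∈ Finset.range (n+1), Cf k * Op k
      = (∑ k ∈ Finset.range n, Cf (k+1) * Op (k+1)) + Cf 0 * Op 0 :=
        Finset.sum_range_succ' _ n
    _ = (∑ k ∈ Finset.range n, ((q^(k+1))⁻¹ * (Cf (k+1) * Φx (k+1))
          + ((q^n)⁻¹ - (q^k)⁻¹) * (Cf k * Φx k))) + Cf 0 * Φx 0 := by
        rw [hOp0]
        exact congrArg (· + Cf 0 * Φx 0) (Finset.sum_congr rfl h2)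
    _ = (∑ k ∈ Finset.range (n+1), (q^k)⁻¹ * (Cf k * Φx k))
          + ∑ k ∈ Finset.range n, ((q^n)⁻¹ - (q^k)⁻¹) * (Cf k * Φx k) := by
        rw [Finset.sum_add_distrib, Finset.sum_range_succ' (fun k => (q^k)⁻¹ * (Cf k * Φx k)) n]
        simp only [pow_zero, inv_one, one_mul]
        ring
    _ = (∑ k ∈ Finset.range (n+1), (q^k)⁻¹ * (Cf k * Φx k))
          + ∑ k ∈ Finset.range (n+1), ((q^n)⁻¹ - (q^k)⁻¹) * (Cf k * Φx k) := by
        rw [Finset.sum_range_succ (fun k => ((q^n)⁻¹ - (q^k)⁻¹) * (Cf k * Φx k)) n]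
        ring
    _ = ∑ k ∈ Finset.range (n+1), (q^n)⁻¹ * (Cf k * Φx k) := by
        rw [← Finset.sum_add_distrib]
        exact Finset.sum_congr rfl fun k _ => by ring
    _ = (q^n)⁻¹ * ∑ k ∈ Finset.range (n+1), Cf k * Φx k := by
        rw [Finset.mul_sum]

/-- The continuous dual q-Hahn polynomials are eigenfunctions, with eigenvalue
`q⁻ⁿ`, of the operator `K₀` of the basic representation of the confluent
Zhedanov algebra `Z_V`. -/
theorem continuousDualQHahn_eigenfunction (n : ℕ) (q a b c : ℂ)
    (hq : q ≠ 0) (ha : a ≠ 0)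
    (hqj : ∀ j : ℕ, 1 ≤ j → j ≤ n → q ^ j ≠ 1)
    (habj : ∀ j : ℕ, j < n → a * b * q ^ j ≠ 1)
    (hacj : ∀ j : ℕ, j < n → a * c * q ^ j ≠ 1)
    (p : ℂ → ℂ)
    (hp : ∀ y : ℂ, p y = qPoch (a * b) q n * qPoch (a * c) q n / a ^ n *
        ∑ k ∈ Finset.range (n + 1),
          qPoch (q ^ n)⁻¹ q k * qPoch (a * y) q k * qPoch (a / y) q k
            / (qPoch q q k * qPoch (a * b) q k * qPoch (a * c) q k) * q ^ k) :
    ∀ x : ℂ, x ≠ 0 → x ^ 2 ≠ 1 → x ^ 2 ≠ q → x ^ 2 ≠ q⁻¹ →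
      (1 - a * x) * (1 - b * x) * (1 - c * x) / ((1 - x ^ 2) * (1 - q * x ^ 2))
          * (p (q * x) - p x)
        + p x
        - x * ((a - x) * (b - x) * (c - x) / ((1 - x ^ 2) * (q - x ^ 2)))
          * (p (x / q) - p x)
        = (q ^ n)⁻¹ * p x := by
  intro x hx hx1 hx2 hx3
  -- nonvanishing of the denominators of the series coefficients
  have hDq : ∀ k, k ≤ n → qPoch q q k ≠ 0 := by
    intro k hk
    rw [qPoch]
    refine Finset.prod_ne_zero_iff.mpr fun j hj => ?_
    have hj' : j < k := Finset.mem_range.mp hj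
    refine sub_ne_zero.mpr fun h => hqj (j+1) (by omega) (by omega) ?_
    rw [pow_succ]
    linear_combination -h
  have hDab : ∀ k, k ≤ n → qPoch (a*b) q k ≠ 0 := by
    intro k hk
    rw [qPoch]
    refine Finset.prod_ne_zero_iff.mpr fun j hj => ?_
    have hj' : j < k := Finset.mem_range.mp hj
    refine sub_ne_zero.mpr fun h => habj j (by omega) ?_
    linear_combination -h
  have hDac : ∀ k, k ≤ n → qPoch (a*c) q k ≠ 0 := by
    intro k hk
    rw [qPoch]
    refine Finset.prod_ne_zero_iff.mpr fun j hj => ?_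
    have hj' : j < k := Finset.mem_range.mp hj
    refine sub_ne_zero.mpr fun h => hacj j (by omega) ?_
    linear_combination -h
  set Φ : ℕ → ℂ → ℂ := fun k y => qPoch (a*y) q k * qPoch (a/y) q k with hPhi
  set Cf : ℕ → ℂ := fun k =>
    qPoch (q^n)⁻¹ q k / (qPoch q q k * qPoch (a*b) q k * qPoch (a*c) q k) * q^k with hCf
  set R : ℕ → ℂ := fun k =>
    -(q^k)⁻¹ * (1 - q^k) * (1 - a*b*q^(k-1)) * (1 - a*c*q^(k-1)) with hR
  set Op : ℕ → ℂ := fun k =>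
    (1 - a*x) * (1 - b*x) * (1 - c*x) / ((1 - x^2) * (1 - q*x^2)) * (Φ k (q*x) - Φ k x)
      + Φ k x
      - x * ((a - x) * (b - x) * (c - x) / ((1 - x^2) * (q - x^2))) * (Φ k (x/q) - Φ k x)
    with hOp
  have hOp0 : Op 0 = Φ 0 x := by
    simp [hOp, hPhi, qPoch]
  have key' : ∀ k : ℕ, Op (k+1) = (q^(k+1))⁻¹ * Φ (k+1) x + R (k+1) * Φ k x := by
    intro k
    simp only [hOp, hPhi, hR, Nat.add_sub_cancel]
    linear_combination qHahn_key q a b c x k hq hx hx1 hx2 hx3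
  have hcoeff : ∀ k, k < n → Cf (k+1) * R (k+1) = ((q^n)⁻¹ - (q^k)⁻¹) * Cf k := by
    intro k hk
    have d1 : qPoch q q k ≠ 0 := hDq k hk.le
    have d2 : qPoch (a*b) q k ≠ 0 := hDab k hk.le
    have d3 : qPoch (a*c) q k ≠ 0 := hDac k hk.le
    have d4 : (1:ℂ) - q*q^k ≠ 0 := by
      refine sub_ne_zero.mpr fun h => hqj (k+1) (by omega) (by omega) ?_
      rw [pow_succ]
      linear_combination -h
    have d5 : (1:ℂ) - a*b*q^k ≠ 0 := sub_ne_zero.mpr (Ne.symm (habj k hk))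
    have d6 : (1:ℂ) - a*c*q^k ≠ 0 := sub_ne_zero.mpr (Ne.symm (hacj k hk))
    have d7 : (q:ℂ)^n ≠ 0 := pow_ne_zero _ hq
    have d8 : (q:ℂ)^k ≠ 0 := pow_ne_zero _ hq
    simp only [hCf, hR, Nat.add_sub_cancel, qPoch_succ]
    rw [show (q:ℂ)^(k+1) = q^k*q from pow_succ q k]
    generalize qPoch (q^n)⁻¹ q k = P
    generalize hDq' : qPoch q q k = Dq at d1 ⊢
    generalize hDab' : qPoch (a*b) q k = Dab at d2 ⊢
    generalize hDac' : qPoch (a*c) q k = Dac at d3 ⊢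
    generalize hS : (q:ℂ)^n = S at d7 ⊢
    generalize hT : (q:ℂ)^k = T at d4 d5 d6 d8 ⊢
    generalize hu1 : (1:ℂ) - q*T = u1 at d4 ⊢
    generalize hu2 : (1:ℂ) - a*b*T = u2 at d5 ⊢
    generalize hu3 : (1:ℂ) - a*c*T = u3 at d6 ⊢
    rw [show (1:ℂ) - T*q = u1 from by linear_combination hu1,
        show (1:ℂ) - S⁻¹*T = (S-T)/S from by field_simp,
        show S⁻¹ - T⁻¹ = (T-S)/(S*T) from by field_simp,
        show ((T:ℂ)*q)⁻¹ = 1/(T*q) from by rw [inv_eq_one_div]]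
    field_simp
    have cM : (S*T*q*u1*u2*u3*Dq*Dab*Dac) * (S*T*q*u1*u2*u3*Dq*Dab*Dac)⁻¹ = 1 :=
      mul_inv_cancel₀ (by simp [d1,d2,d3,d4,d5,d6,d7,d8,hq])
    ring
  have main := aux_telescope n q Cf R Op (fun k => Φ k x) hOp0 key' hcoeff
  have distrib : ∑ k ∈ Finset.range (n+1), Cf k * Op k =
      (1 - a*x) * (1 - b*x) * (1 - c*x) / ((1 - x^2) * (1 - q*x^2)) *
        ((∑ k ∈ Finset.range (n+1), Cf k * Φ k (q*x)) - ∑ k ∈ Finset.range (n+1), Cf k * Φ k x)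
      + (∑ k ∈ Finset.range (n+1), Cf k * Φ k x)
      - x * ((a - x) * (b - x) * (c - x) / ((1 - x^2) * (q - x^2))) *
        ((∑ k ∈ Finset.range (n+1), Cf k * Φ k (x/q)) - ∑ k ∈ Finset.range (n+1), Cf k * Φ k x) := by
    simp only [hOp, Finset.mul_sum, ← Finset.sum_sub_distrib, ← Finset.sum_add_distrib]
    exact Finset.sum_congr rfl fun k _ => by ring
  have main' := distrib.symm.trans main
  have hsum : ∀ y : ℂ,
      (∑ k ∈ Finset.range (n+1),
        qPoch (q^n)⁻¹ q k * qPoch (a*y) q k * qPoch (a/y) q k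
          / (qPoch q q k * qPoch (a*b) q k * qPoch (a*c) q k) * q^k)
      = ∑ k ∈ Finset.range (n+1), Cf k * Φ k y := by
    intro y
    exact Finset.sum_congr rfl fun k _ => by simp only [hCf, hPhi]; ring
  simp only [hp]
  rw [hsum (q*x), hsum x, hsum (x/q)]
  linear_combination (qPoch (a*b) q n * qPoch (a*c) q n / a^n) * main'
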